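/- The deterministic palindrome language DPali_Σ = {u#u^R | u ∈ Σ*} over Σ ∪ {#} has topological entropy η(DPali_Σ) = log₂|Σ|. -/

import Mathlib

open Filter

/-- The `n`-th Myhill–Nerode approximation: `u ~ v` iff all witnesses of length at most `n`
agree. -/
def thetaN {α : Type*} (L : Set (List α)) (n : ℕ) (u v : List α) : Prop :=
  ∀ w : List α, w.length ≤ n → ((u ++ w) ∈ L ↔ (v ++ w) ∈ L)

/-- The index (number of classes) of `thetaN L n`. -/
noncomputable def indexN {α : Type*} (L : Set (List α)) (n : ℕ) : ℕ :=
  Nat.card (Quot (thetaN L n))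

/-- Topological entropy of a language, with values in `[0,∞]`. -/
noncomputable def entropy {α : Type*} (L : Set (List α)) : ENNReal :=
  Filter.limsup (fun n : ℕ => ENNReal.ofReal (Real.logb 2 (indexN L n) / n)) Filter.atTop

/-- The deterministic palindrome language `{u # uᴿ}` over `Option Σ`, where `none`
plays the role of the marker `#`. -/
def DPali (α : Type*) : Set (List (Option α)) :=
  {w | ∃ u : List α, w = u.map some ++ none :: (u.reverse.map some)}

section aux2
variable {α : Type*}

variable {α : Type*}

lemma marker_eq : ∀ (a c : List α) (s s' : List (Option α)),
    a.map some ++ none :: s = c.map some ++ none :: s' → a = c ∧ s = s' := by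
  intro a
  induction a with
  | nil =>
    intro c s s' h
    cases c with
    | nil => simpa using h
    | cons b bs => simp at h
  | cons x xs ih =>
    intro c s s' h
    cases c with
    | nil => simp at h
    | cons y ys =>
      simp only [List.map_cons, List.cons_append, List.cons.injEq, Option.some.injEq] at h
      obtain ⟨h1, h2⟩ := h
      obtain ⟨h3, h4⟩ := ih ys s s' h2
      exact ⟨by rw [h1, h3], h4⟩

lemma split_eq : ∀ (u : List α) (w : List (Option α)) (v : List α) (z : List (Option α)),
    u.map some ++ w = v.map some ++ none :: z →
    ∃ s : List α, v = u ++ s ∧ w = s.map some ++ none :: z := by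
  intro u
  induction u with
  | nil => intro w v z h; exact ⟨v, rfl, by simpa using h⟩
  | cons x xs ih =>
    intro w v z h
    cases v with
    | nil => simp at h
    | cons y ys =>
      simp only [List.map_cons, List.cons_append, List.cons.injEq, Option.some.injEq] at h
      obtain ⟨rfl, h2⟩ := h
      obtain ⟨s, rfl, hw⟩ := ih w ys z h2
      exact ⟨s, rfl, hw⟩

lemma mem_dpali_marker (u : List α) (z : List (Option α)) :
    u.map some ++ none :: z ∈ DPali α ↔ z = u.reverse.map some := by
  constructor
  · rintro ⟨v, hv⟩
    obtain ⟨h1, h2⟩ := marker_eq u v _ _ hv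
    subst h1; exact h2
  · rintro rfl; exact ⟨u, rfl⟩

lemma mem_dpali_nomarker (u : List α) (w : List (Option α)) :
    u.map some ++ w ∈ DPali α ↔
      ∃ s : List α, w = s.map some ++ none :: ((u ++ s).reverse.map some) := by
  constructor
  · rintro ⟨v, hv⟩
    obtain ⟨s, rfl, hw⟩ := split_eq u w v _ hv
    exact ⟨s, hw⟩
  · rintro ⟨s, rfl⟩
    exact ⟨u ++ s, by simp⟩

lemma eq_map_some_of_not_none (l : List (Option α)) (h : (none : Option α) ∉ l) :
    ∃ u : List α, l = u.map some := by
  induction l with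
  | nil => exact ⟨[], rfl⟩
  | cons a t ih =>
    simp only [List.mem_cons, not_or] at h
    obtain ⟨u, rfl⟩ := ih h.2
    obtain ⟨b, rfl⟩ := Option.ne_none_iff_exists'.mp (Ne.symm h.1)
    exact ⟨b :: u, rfl⟩

lemma decomp_of_none_mem (l : List (Option α)) (h : (none : Option α) ∈ l) :
    ∃ (u : List α) (t : List (Option α)), l = u.map some ++ none :: t := by
  induction l with
  | nil => simp at h
  | cons a t ih =>
    rcases a with _ | b
    · exact ⟨[], t, rfl⟩
    · simp only [List.mem_cons, reduceCtorEq, false_or] at h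
      obtain ⟨u, t', rfl⟩ := ih h
      exact ⟨b :: u, t', rfl⟩

def Pset (L : Set (List (Option α))) (n : ℕ) (x : List (Option α)) : Set (List (Option α)) :=
  {w | w.length ≤ n ∧ x ++ w ∈ L}

lemma thetaN_iff_pset (L : Set (List (Option α))) (n : ℕ) (x y : List (Option α)) :
    thetaN L n x y ↔ Pset L n x = Pset L n y := by
  constructor
  · intro h
    ext w
    simp only [Pset, Set.mem_setOf_eq]
    exact and_congr_right fun hl => h w hl
  · intro h w hl
    have := Set.ext_iff.mp h w
    simpa [Pset, hl] using this

def Fcl (α : Type*) (n : ℕ) :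
    Option ({l : List α // l.length ≤ n} ⊕ {l : List α // l.length ≤ n}) →
      Set (List (Option α))
  | none => ∅
  | some (Sum.inl u) => {w | w.length ≤ n ∧ ∃ s : List α,
      w = s.map some ++ none :: ((u.1 ++ s).reverse.map some)}
  | some (Sum.inr r) => {(r.1.map some : List (Option α))}

lemma pset_covered (n : ℕ) (x : List (Option α)) :
    ∃ t, Fcl α n t = Pset (DPali α) n x := by
  by_cases hx : (none : Option α) ∈ x
  · obtain ⟨u, t', rfl⟩ := decomp_of_none_mem x hx
    have hassoc : ∀ w : List (Option α),
        (u.map some ++ none :: t') ++ w = u.map some ++ none :: (t' ++ w) := by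
      intro w; simp
    by_cases hpre : ∃ w0 : List (Option α), t' ++ w0 = u.reverse.map some
    · obtain ⟨w0, hw0⟩ := hpre
      have hw0' : w0 = (u.reverse.drop t'.length).map some := by
        have h1 := congrArg (List.drop t'.length) hw0
        rw [List.drop_left] at h1
        rw [h1, List.map_drop]
      have hmem : ∀ w, (u.map some ++ none :: t') ++ w ∈ DPali α ↔ w = w0 := by
        intro w
        rw [hassoc, mem_dpali_marker]
        constructor
        · intro hh
          have : t' ++ w = t' ++ w0 := by rw [hh, hw0]
          exact List.append_cancel_left this
        · rintro rfl; exact hw0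
      by_cases hlen : (u.reverse.drop t'.length).length ≤ n
      · refine ⟨some (Sum.inr ⟨u.reverse.drop t'.length, hlen⟩), ?_⟩
        ext w
        simp only [Fcl, Pset, Set.mem_setOf_eq, Set.mem_singleton_iff]
        rw [hmem w, hw0']
        constructor
        · rintro rfl; exact ⟨by simpa using hlen, rfl⟩
        · rintro ⟨_, rfl⟩; rfl
      · refine ⟨none, ?_⟩
        ext w
        simp only [Fcl, Pset, Set.mem_setOf_eq, Set.mem_empty_iff_false, false_iff, not_and]
        intro hl hm
        rw [hmem w] at hm
        subst hm
        rw [hw0'] at hl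
        simp only [List.length_map] at hl
        exact hlen hl
    · refine ⟨none, ?_⟩
      ext w
      simp only [Fcl, Pset, Set.mem_setOf_eq, Set.mem_empty_iff_false, false_iff, not_and]
      intro hl hm
      rw [hassoc, mem_dpali_marker] at hm
      exact hpre ⟨w, hm⟩
  · obtain ⟨u, rfl⟩ := eq_map_some_of_not_none x hx
    by_cases hu : u.length ≤ n
    · refine ⟨some (Sum.inl ⟨u, hu⟩), ?_⟩
      ext w
      simp only [Fcl, Pset, Set.mem_setOf_eq]
      rw [mem_dpali_nomarker]
    · refine ⟨none, ?_⟩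
      ext w
      simp only [Fcl, Pset, Set.mem_setOf_eq, Set.mem_empty_iff_false, false_iff, not_and]
      intro hl hm
      rw [mem_dpali_nomarker] at hm
      obtain ⟨s, rfl⟩ := hm
      simp only [List.length_append, List.length_map, List.length_cons, List.length_reverse] at hl
      omega

noncomputable def psetQ (L : Set (List (Option α))) (n : ℕ) :
    Quot (thetaN L n) → Set (List (Option α)) :=
  Quot.lift (Pset L n) fun a b h => (thetaN_iff_pset L n a b).mp h

lemma psetQ_inj (L : Set (List (Option α))) (n : ℕ) : Function.Injective (psetQ L n) := by
  intro q q'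
  induction q using Quot.ind with | _ x =>
  induction q' using Quot.ind with | _ y =>
  intro h
  exact Quot.sound ((thetaN_iff_pset L n x y).mpr h)

lemma existsF (n : ℕ) (q : Quot (thetaN (DPali α) n)) :
    ∃ t, Fcl α n t = psetQ (DPali α) n q := by
  induction q using Quot.ind with | _ x =>
  exact pset_covered n x

noncomputable def clsf (n : ℕ) (q : Quot (thetaN (DPali α) n)) :
    Option ({l : List α // l.length ≤ n} ⊕ {l : List α // l.length ≤ n}) :=
  Classical.choose (existsF n q)

instance finOpt {β : Type*} [Finite β] : Finite (Option β) :=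
  Finite.of_equiv (β ⊕ PUnit.{1}) (Equiv.optionEquivSumPUnit.{0} β).symm

lemma clsf_inj (n : ℕ) : Function.Injective (clsf (α := α) n) := by
  intro q q' h
  apply psetQ_inj (DPali α) n
  rw [← Classical.choose_spec (existsF n q), ← Classical.choose_spec (existsF n q')]
  exact congrArg (Fcl α n) h

instance finB [Finite α] (n : ℕ) : Finite {l : List α // l.length ≤ n} :=
  Set.Finite.to_subtype (List.finite_length_le α n)

noncomputable instance finQ [Finite α] (n : ℕ) : Finite (Quot (thetaN (DPali α) n)) :=
  Finite.of_injective _ (clsf_inj n)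

variable [Fintype α]

lemma card_B_le (n : ℕ) (a0 : α) :
    Nat.card {l : List α // l.length ≤ n} ≤ (n + 1) * Fintype.card α ^ n := by
  have hinj : Function.Injective (fun l : {l : List α // l.length ≤ n} =>
      ((⟨l.1.length, by omega⟩ : Fin (n + 1)), fun i : Fin n => l.1.getD i a0)) := by
    rintro ⟨l, hl⟩ ⟨l', hl'⟩ h
    simp only [Prod.mk.injEq, Fin.mk.injEq] at h
    obtain ⟨h1, h2⟩ := h
    refine Subtype.ext (List.ext_getElem h1 fun i hi1 hi2 => ?_)
    have hi : i < n := lt_of_lt_of_le hi1 hl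
    have h3 : l.getD i a0 = l'.getD i a0 := congrFun h2 ⟨i, hi⟩
    rwa [List.getD_eq_getElem l a0 hi1, List.getD_eq_getElem l' a0 hi2] at h3
  calc Nat.card {l : List α // l.length ≤ n}
      ≤ Nat.card (Fin (n + 1) × (Fin n → α)) := Nat.card_le_card_of_injective _ hinj
    _ = (n + 1) * Fintype.card α ^ n := by
        simp [Nat.card_prod, Nat.card_fun, Nat.card_eq_fintype_card]

lemma indexN_le (n : ℕ) (a0 : α) :
    indexN (DPali α) n ≤ 2 * ((n + 1) * Fintype.card α ^ n) + 1 := by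
  have h1 : indexN (DPali α) n ≤
      Nat.card (Option ({l : List α // l.length ≤ n} ⊕ {l : List α // l.length ≤ n})) :=
    Nat.card_le_card_of_injective _ (clsf_inj n)
  rw [Finite.card_option, Nat.card_sum] at h1
  have h2 := card_B_le n a0
  omega

lemma le_indexN (n : ℕ) : Fintype.card α ^ n ≤ indexN (DPali α) n := by
  set L := DPali α with hL
  have hinj : Function.Injective (fun u : Fin n → α =>
      Quot.mk (thetaN L n) ((List.ofFn u).map some ++ [none])) := by
    intro u v h
    have h2 : Pset L n ((List.ofFn u).map some ++ [none]) =
        Pset L n ((List.ofFn v).map some ++ [none]) := congrArg (psetQ L n) h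
    have hu : ((List.ofFn u).reverse.map some) ∈ Pset L n ((List.ofFn u).map some ++ [none]) := by
      refine ⟨by simp, ?_⟩
      show ((List.ofFn u).map some ++ [none]) ++ ((List.ofFn u).reverse.map some) ∈ L
      rw [List.append_assoc, List.singleton_append]
      exact (mem_dpali_marker _ _).mpr rfl
    rw [h2] at hu
    obtain ⟨-, hm⟩ := hu
    have hm2 : ((List.ofFn v).map some ++ [none]) ++ ((List.ofFn u).reverse.map some) ∈ L := hm
    rw [List.append_assoc, List.singleton_append, mem_dpali_marker] at hm2
    rename' hm2 => hm
    have h3 : (List.ofFn u).reverse = (List.ofFn v).reverse :=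
      List.map_injective_iff.mpr (Option.some_injective α) hm
    exact List.ofFn_injective (List.reverse_injective h3)
  have := Nat.card_le_card_of_injective _ hinj
  simpa [Nat.card_fun, Nat.card_eq_fintype_card, indexN] using this

end aux2

section analysis
variable (k : ℕ) (idx : ℕ → ℕ)

lemma tendsto_logb_aux : Tendsto (fun n : ℕ => Real.logb 2 (4 * (n + 1)) / n) atTop (nhds 0) := by
  have h1 := Real.tendsto_pow_log_div_mul_add_atTop (1/4) (-1) 1 (by norm_num)
  have h2 : Tendsto (fun n : ℕ => (4 * ((n : ℝ) + 1))) atTop atTop := by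
    apply tendsto_atTop_mono (fun n : ℕ => ?_) tendsto_natCast_atTop_atTop
    have : (0:ℝ) ≤ (n:ℝ) := Nat.cast_nonneg n
    nlinarith
  have h3 := h1.comp h2
  have h4 : (fun n : ℕ => Real.log (4 * ((n:ℝ) + 1)) ^ 1 / (1/4 * (4 * ((n:ℝ) + 1)) + -1))
      = fun n : ℕ => Real.log (4 * ((n:ℝ) + 1)) / n := by
    funext n
    rw [pow_one]
    congr 1
    ring
  rw [Function.comp_def] at h3  -- maybe needed
  rw [h4] at h3
  have h5 := h3.div_const (Real.log 2)
  rw [zero_div] at h5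
  have h6 : (fun n : ℕ => Real.log (4 * ((n:ℝ) + 1)) / n / Real.log 2)
      = fun n : ℕ => Real.logb 2 (4 * (n + 1)) / n := by
    funext n
    rw [Real.logb, div_div, div_div, mul_comm (n:ℝ) (Real.log 2)]
  rw [h6] at h5
  exact h5

lemma main_tendsto (hk : 2 ≤ k)
    (hlow : ∀ n, k ^ n ≤ idx n) (hhigh : ∀ n, idx n ≤ 2 * ((n + 1) * k ^ n) + 1) :
    Tendsto (fun n : ℕ => Real.logb 2 (idx n) / n) atTop (nhds (Real.logb 2 k)) := by
  have hk1 : (1:ℝ) < (k:ℝ) := by exact_mod_cast hk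
  have hkpos : (0:ℝ) < (k:ℝ) := by linarith
  apply tendsto_of_tendsto_of_tendsto_of_le_of_le' (g := fun _ : ℕ => Real.logb 2 k)
    (h := fun n : ℕ => Real.logb 2 (4 * (n + 1)) / n + Real.logb 2 k)
  · exact tendsto_const_nhds
  · have := (tendsto_logb_aux).add (tendsto_const_nhds (x := Real.logb 2 (k:ℝ)))
    rwa [zero_add] at this
  · filter_upwards [eventually_ge_atTop 1] with n hn
    have hnpos : (0:ℝ) < (n:ℝ) := by exact_mod_cast hn
    have hpow : (0:ℝ) < (k:ℝ) ^ n := pow_pos hkpos n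
    have hidx : ((k:ℝ)) ^ n ≤ (idx n : ℝ) := by exact_mod_cast hlow n
    have hlogb : Real.logb 2 ((k:ℝ) ^ n) ≤ Real.logb 2 (idx n) :=
      (Real.logb_le_logb (by norm_num) hpow (lt_of_lt_of_le hpow hidx)).mpr hidx
    rw [Real.logb_pow] at hlogb
    rw [le_div_iff₀ hnpos]
    calc Real.logb 2 (k:ℝ) * n = (n:ℝ) * Real.logb 2 (k:ℝ) := by ring
      _ ≤ Real.logb 2 (idx n) := hlogb
  · filter_upwards [eventually_ge_atTop 1] with n hn
    have hnpos : (0:ℝ) < (n:ℝ)  := by exact_mod_cast hn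
    have hpow : (0:ℝ) < (k:ℝ) ^ n := pow_pos hkpos n
    have hidx : ((k:ℝ)) ^ n ≤ (idx n : ℝ) := by exact_mod_cast hlow n
    have hidxpos : (0:ℝ) < (idx n : ℝ) := lt_of_lt_of_le hpow hidx
    have hub : (idx n : ℝ) ≤ 4 * (n + 1) * (k:ℝ) ^ n := by
      have h1 : idx n ≤ 4 * (n + 1) * k ^ n := by
        have := hhigh n
        have hp : 1 ≤ k ^ n := Nat.one_le_pow _ _ (by omega)
        nlinarith
      calc (idx n : ℝ) ≤ ((4 * (n + 1) * k ^ n : ℕ) : ℝ) := by exact_mod_cast h1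
        _ = 4 * (n + 1) * (k:ℝ) ^ n := by push_cast; ring
    have h4pos : (0:ℝ) < 4 * (n + 1) := by positivity
    have hlogb : Real.logb 2 (idx n) ≤ Real.logb 2 (4 * (n + 1) * (k:ℝ) ^ n) :=
      (Real.logb_le_logb (by norm_num) hidxpos (by positivity)).mpr hub
    rw [Real.logb_mul (ne_of_gt h4pos) (ne_of_gt hpow), Real.logb_pow] at hlogb
    rw [div_le_iff₀ hnpos]
    calc Real.logb 2 (idx n) ≤ Real.logb 2 (4 * (n + 1)) + (n:ℝ) * Real.logb 2 (k:ℝ) := hlogb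
      _ = (Real.logb 2 (4 * (n + 1)) / n + Real.logb 2 (k:ℝ)) * n := by
          field_simp
end analysis

theorem entropy_dpali (α : Type*) [Fintype α] (h : 2 ≤ Fintype.card α) :
    entropy (DPali α) = ENNReal.ofReal (Real.logb 2 (Fintype.card α)) := by
  obtain ⟨a0⟩ : Nonempty α := Fintype.card_pos_iff.mp (by omega)
  have hmain := main_tendsto (Fintype.card α) (indexN (DPali α)) h
    (fun n => le_indexN n) (fun n => indexN_le n a0)
  exact (ENNReal.tendsto_ofReal hmain).limsup_eq
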